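/- Let p ∈ (0,1) and let (x(i))_{i∈ℤ} be i.i.d. Bernoulli(p) random variables. Then for all integers i ≤ j and every real t > 0, P( max_{l ∈ [i,j]} | x[i,l] − (l−i+1)p | > t ) ≤ 6 exp( −2t² / (9(j−i+1)) ). -/

import Mathlib

open scoped BigOperators

/-- A particle configuration on `ℤ`: a `{0,1}`-valued function. -/
abbrev Config := ℤ → ℤ

/-- `x` takes only the values `0` and `1`. -/
def IsConfig (x : Config) : Prop := ∀ i, x i = 0 ∨ x i = 1

/-- `x[i,j] = ∑_{k=i}^j x(k)` (zero if `j < i`). -/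
noncomputable def cnt (x : Config) (i j : ℤ) : ℤ := ∑ k ∈ Finset.Icc i j, x k

/-- `(a,s)` has finite queue lengths. -/
def FinQ (a s : Config) : Prop :=
  ∀ i : ℤ, BddAbove {v : ℤ | ∃ j ≤ i, v = cnt a j i - cnt s j i}

/-- The queue length `Q_i(a,s) = sup_{j ≤ i} max(a[j,i] - s[j,i], 0)`. -/
noncomputable def queue (a s : Config) (i : ℤ) : ℤ :=
  sSup {q : ℤ | ∃ j ≤ i, q = max (cnt a j i - cnt s j i) 0}

/-- The departure configuration `D(a,s)`. -/
noncomputable def dep (a s : Config) : Config := fun i =>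
  if s i = 1 ∧ (0 < queue a s (i - 1) ∨ a i = 1) then 1 else 0

/-- The unused-service configuration `U(a,s)`. -/
noncomputable def unusedSrv (a s : Config) : Config := fun i =>
  if s i = 1 ∧ queue a s (i - 1) = 0 ∧ a i = 0 then 1 else 0

/-- `R(a,s)(i) = a(i) + U(a,s)(i)`. -/
noncomputable def Rmap (a s : Config) : Config := fun i => a i + unusedSrv a s i

/-- Truncation: `x_{n,0}(i) = x(i)` for `i ≥ n`, `0` otherwise. -/
def trunc (x : Config) (n : ℤ) : Config := fun i => if n ≤ i then x i else 0

/-- Left-peeling tandem queue: `Dtandem x [s₁,…,s_k] = D(…D(D(x,s₁),s₂)…,s_k)`. -/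
noncomputable def Dtandem : Config → List Config → Config
  | x, [] => x
  | x, s :: rest => Dtandem (dep x s) rest

/-- `DtandemList [x₁,…,xₙ] = Dⁿ(x₁,…,xₙ)`. -/
noncomputable def DtandemList : List Config → Config
  | [] => fun _ => 0
  | x :: rest => Dtandem x rest

/-- `DtandemN x = Dⁿ(x 0, …, x (n-1))`. -/
noncomputable def DtandemN {n : ℕ} (x : Fin n → Config) : Config :=
  DtandemList (List.ofFn x)

/-- Every pair appearing as (arrivals, services) in the recursive definition of the
tandem departure map has finite queue lengths. -/
def TandemFinQ : List Config → Prop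
  | [] => True
  | [_] => True
  | x :: s :: rest => FinQ x s ∧ TandemFinQ (dep x s :: rest)
  termination_by l => l.length

open MeasureTheory ProbabilityTheory

section Helpers

lemma exp_mul_le_of_abs_le {c w : ℝ} (hw : |w| ≤ 1) :
    Real.exp (c * w) ≤ Real.cosh c + w * Real.sinh c := by
  obtain ⟨h1, h2⟩ := abs_le.mp hw
  have h := convexOn_exp.2 (Set.mem_univ (-c)) (Set.mem_univ c)
    (show (0:ℝ) ≤ (1 - w)/2 by linarith) (show (0:ℝ) ≤ (1 + w)/2 by linarith)
    (show (1 - w)/2 + (1 + w)/2 = 1 by ring)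
  simp only [smul_eq_mul] at h
  have e1 : (1 - w)/2 * (-c) + (1 + w)/2 * c = c * w := by ring
  rw [e1] at h
  calc Real.exp (c * w) ≤ (1 - w)/2 * Real.exp (-c) + (1 + w)/2 * Real.exp c := h
    _ = Real.cosh c + w * Real.sinh c := by rw [Real.cosh_eq, Real.sinh_eq]; ring

variable {Ω : Type} [MeasurableSpace Ω]

lemma integrable_of_bdd (P : Measure Ω) [IsProbabilityMeasure P] {f : Ω → ℝ} {C : ℝ}
    (hm : Measurable f) (hb : ∀ ω, |f ω| ≤ C) : Integrable f P :=
  (integrable_const C).mono' hm.aestronglyMeasurable (ae_of_all _ (by simpa using hb))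

lemma mgf_aux (P : Measure Ω) [IsProbabilityMeasure P] {W : Ω → ℝ}
    (hm : Measurable W) (hb : ∀ ω, |W ω| ≤ 1) (hmean : ∫ ω, W ω ∂P = 0) (c : ℝ) :
    ∫ ω, Real.exp (c * W ω) ∂P ≤ Real.exp (c ^ 2 / 2) := by
  have hint : Integrable (fun ω => Real.exp (c * W ω)) P := by
    refine integrable_of_bdd P (C := Real.exp |c|) ((hm.const_mul c).exp) (fun ω => ?_)
    rw [abs_of_pos (Real.exp_pos _), Real.exp_le_exp]
    calc c * W ω ≤ |c * W ω| := le_abs_self _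
      _ = |c| * |W ω| := abs_mul _ _
      _ ≤ |c| * 1 := by nlinarith [abs_nonneg c, hb ω]
      _ = |c| := mul_one _
  have hWint : Integrable W P := integrable_of_bdd P hm (fun ω => hb ω)
  calc ∫ ω, Real.exp (c * W ω) ∂P
      ≤ ∫ ω, (Real.cosh c + W ω * Real.sinh c) ∂P := by
        refine integral_mono hint ?_ (fun ω => exp_mul_le_of_abs_le (hb ω))
        exact (integrable_const _).add (hWint.mul_const _)
    _ = Real.cosh c := by
        rw [integral_add (integrable_const _) (hWint.mul_const _), integral_const,
          integral_mul_const, hmean]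
        simp
    _ ≤ Real.exp (c ^ 2 / 2) := Real.cosh_le_exp_half_sq c
lemma integrable_exp_bdd (P : Measure Ω) [IsProbabilityMeasure P] {f : Ω → ℝ} {B : ℝ}
    (hm : Measurable f) (hB : ∀ ω, |f ω| ≤ B) (c : ℝ) :
    Integrable (fun ω => Real.exp (c * f ω)) P := by
  refine integrable_of_bdd P (C := Real.exp (|c| * B)) ((hm.const_mul c).exp) (fun ω => ?_)
  rw [abs_of_pos (Real.exp_pos _), Real.exp_le_exp]
  calc c * f ω ≤ |c * f ω| := le_abs_self _
    _ = |c| * |f ω| := abs_mul _ _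
    _ ≤ |c| * B := mul_le_mul_of_nonneg_left (hB ω) (abs_nonneg c)

lemma onesided (P : Measure Ω) [IsProbabilityMeasure P]
    (Z : ℤ → Ω → ℝ) (hm : ∀ r, Measurable (Z r))
    (hind : iIndepFun Z P)
    (hb : ∀ r ω, |Z r ω| ≤ 1) (hmean : ∀ r, ∫ ω, Z r ω ∂P = 0)
    (i j : ℤ) (hij : i ≤ j) {t c : ℝ} (hc : 0 < c) :
    P {ω | ∃ l ∈ Finset.Icc i j, t ≤ ∑ r ∈ Finset.Icc i l, Z r ω}
      ≤ ENNReal.ofReal (Real.exp (-(c * t) + ((j : ℝ) - (i : ℝ) + 1) * c ^ 2 / 2)) := by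
  classical
  set M : ℤ → Ω → ℝ := fun l ω => ∑ r ∈ Finset.Icc i l, Z r ω with hMdef
  have hMeasM : ∀ l, Measurable (M l) := fun l => Finset.measurable_sum _ (fun r _ => hm r)
  have hMb : ∀ l ω, |M l ω| ≤ ((Finset.Icc i l).card : ℝ) := by
    intro l ω
    calc |M l ω| ≤ ∑ r ∈ Finset.Icc i l, |Z r ω| := Finset.abs_sum_le_sum_abs _ _
      _ ≤ ∑ r ∈ Finset.Icc i l, (1:ℝ) := Finset.sum_le_sum (fun r _ => hb r ω)
      _ = ((Finset.Icc i l).card : ℝ) := by rw [Finset.sum_const]; simp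
  have hintM : ∀ l, Integrable (fun ω => Real.exp (c * M l ω)) P :=
    fun l => integrable_exp_bdd P (hMeasM l) (hMb l) c
  set A : ℤ → Set Ω := fun l =>
    {ω | t ≤ M l ω} ∩ ⋂ l' ∈ (Finset.Icc i (l-1) : Finset ℤ), {ω | M l' ω < t} with hAdef
  have hAmem : ∀ l ω, ω ∈ A l ↔ t ≤ M l ω ∧ ∀ l' ∈ Finset.Icc i (l-1), M l' ω < t := by
    intro l ω
    simp only [hAdef, Set.mem_inter_iff, Set.mem_setOf_eq, Set.mem_iInter]
  have hMeasA : ∀ l, MeasurableSet (A l) := fun l =>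
    (measurableSet_le measurable_const (hMeasM l)).inter
      (MeasurableSet.biInter (Set.to_countable _)
        (fun l' _ => measurableSet_lt (hMeasM l') measurable_const))
  have hE : {ω | ∃ l ∈ Finset.Icc i j, t ≤ M l ω} = ⋃ l ∈ Finset.Icc i j, A l := by
    ext ω
    simp only [Set.mem_setOf_eq, Set.mem_iUnion, exists_prop]
    constructor
    · rintro ⟨l, hl, hlt⟩
      have hne : ((Finset.Icc i j).filter (fun l => t ≤ M l ω)).Nonempty :=
        ⟨l, Finset.mem_filter.2 ⟨hl, hlt⟩⟩
      obtain ⟨h1, h2⟩ := Finset.mem_filter.1 (Finset.min'_mem _ hne)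
      refine ⟨_, h1, (hAmem _ _).2 ⟨h2, ?_⟩⟩
      intro l' hl'
      by_contra h'
      push_neg at h'
      obtain ⟨hi', hl''⟩ := Finset.mem_Icc.1 hl'
      have hl'mem : l' ∈ (Finset.Icc i j).filter (fun l => t ≤ M l ω) := by
        refine Finset.mem_filter.2 ⟨Finset.mem_Icc.2 ⟨hi', ?_⟩, h'⟩
        have := (Finset.mem_Icc.1 h1).2
        omega
      have := Finset.min'_le _ _ hl'mem
      omega
    · rintro ⟨l, hl, hω⟩
      exact ⟨l, hl, ((hAmem _ _).1 hω).1⟩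
  have hDisj0 : ∀ l l' : ℤ, i ≤ l → l < l' → Disjoint (A l) (A l') := by
    intro l l' hi0 hlt
    refine Set.disjoint_left.2 fun ω hωl hωl' => ?_
    have h1 := ((hAmem l ω).1 hωl).1
    have h2 := ((hAmem l' ω).1 hωl').2 l (Finset.mem_Icc.2 ⟨hi0, by omega⟩)
    linarith
  have hDisj : (↑(Finset.Icc i j) : Set ℤ).PairwiseDisjoint A := by
    intro l hl l' hl' hne
    have hi1 := (Finset.mem_Icc.1 (Finset.mem_coe.1 hl)).1
    have hi2 := (Finset.mem_Icc.1 (Finset.mem_coe.1 hl')).1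
    rcases lt_or_gt_of_ne hne with h | h
    · exact hDisj0 l l' hi1 h
    · exact (hDisj0 l' l hi2 h).symm
  -- per-l key inequality
  have key : ∀ l ∈ Finset.Icc i j,
      Real.exp (c * t) * (P (A l)).toReal ≤ ∫ ω in A l, Real.exp (c * M j ω) ∂P := by
    intro l hl
    obtain ⟨hil, hlj⟩ := Finset.mem_Icc.1 hl
    set T : Ω → ℝ := fun ω => ∑ r ∈ Finset.Ioc l j, Z r ω with hTdef
    have hTmeas : Measurable T := Finset.measurable_sum _ (fun r _ => hm r)
    have hTb : ∀ ω, |T ω| ≤ ((Finset.Ioc l j).card : ℝ) := by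
      intro ω
      calc |T ω| ≤ ∑ r ∈ Finset.Ioc l j, |Z r ω| := Finset.abs_sum_le_sum_abs _ _
        _ ≤ ∑ r ∈ Finset.Ioc l j, (1:ℝ) := Finset.sum_le_sum (fun r _ => hb r ω)
        _ = _ := by rw [Finset.sum_const]; simp
    have hTint0 : Integrable T P := integrable_of_bdd P hTmeas hTb
    have hTint : Integrable (fun ω => Real.exp (c * T ω)) P :=
      integrable_exp_bdd P hTmeas hTb c
    have hsplit : ∀ ω, M j ω = M l ω + T ω := by
      intro ω
      have hu : Finset.Icc i j = Finset.Icc i l ∪ Finset.Ioc l j := by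
        ext x
        simp only [Finset.mem_union, Finset.mem_Icc, Finset.mem_Ioc]
        omega
      have hd : Disjoint (Finset.Icc i l) (Finset.Ioc l j) := by
        rw [Finset.disjoint_left]
        intro x hx hx'
        simp only [Finset.mem_Icc] at hx
        simp only [Finset.mem_Ioc] at hx'
        omega
      show ∑ r ∈ Finset.Icc i j, Z r ω = _
      rw [hu, Finset.sum_union hd]
    have step1 : Real.exp (c * t) * (P (A l)).toReal ≤ ∫ ω in A l, Real.exp (c * M l ω) ∂P := by
      refine setIntegral_ge_of_const_le_real (hMeasA l) (measure_ne_top P _) (fun ω hω => ?_)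
        ((hintM l).integrableOn)
      exact Real.exp_le_exp.2 (mul_le_mul_of_nonneg_left ((hAmem l ω).1 hω).1 hc.le)
    have hTmean : ∫ ω, T ω ∂P = 0 := by
      rw [hTdef]
      rw [integral_finset_sum _ (fun r _ => integrable_of_bdd P (hm r) (hb r))]
      simp [hmean]
    have hT1 : (1:ℝ) ≤ ∫ ω, Real.exp (c * T ω) ∂P := by
      have hle : ∀ ω, c * T ω + 1 ≤ Real.exp (c * T ω) := fun ω => Real.add_one_le_exp _
      have h0 : ∫ ω, (c * T ω + 1) ∂P = 1 := by
        rw [integral_add ((hTint0.const_mul c)) (integrable_const 1)]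
        have : ∫ ω, c * T ω ∂P = c * ∫ ω, T ω ∂P := integral_const_mul c T
        rw [this, hTmean, integral_const]
        simp
      calc (1:ℝ) = ∫ ω, (c * T ω + 1) ∂P := h0.symm
        _ ≤ _ := integral_mono ((hTint0.const_mul c).add (integrable_const 1)) hTint hle
    -- independence machinery
    have hST : Disjoint (Finset.Icc i l) (Finset.Ioc l j) := by
      rw [Finset.disjoint_left]
      intro x hx hx'
      simp only [Finset.mem_Icc] at hx
      simp only [Finset.mem_Ioc] at hx'
      omega
    have base := hind.indepFun_finset (Finset.Icc i l) (Finset.Ioc l j) hST hm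
    set mm : ℤ → (↥(Finset.Icc i l) → ℝ) → ℝ := fun l' v =>
      ∑ r ∈ Finset.univ.filter (fun r : ↥(Finset.Icc i l) => (r : ℤ) ≤ l'), v r with hmmdef
    have hmm : ∀ l', Measurable (mm l') :=
      fun l' => Finset.measurable_sum _ (fun r _ => measurable_pi_apply r)
    set SU : Set (↥(Finset.Icc i l) → ℝ) :=
      {v | t ≤ mm l v} ∩ ⋂ l' ∈ (Finset.Icc i (l-1) : Finset ℤ), {v | mm l' v < t} with hSUdef
    have hSU : MeasurableSet SU :=
      (measurableSet_le measurable_const (hmm l)).inter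
        (MeasurableSet.biInter (Set.to_countable _)
          (fun l' _ => measurableSet_lt (hmm l') measurable_const))
    set gU : (↥(Finset.Icc i l) → ℝ) → ℝ :=
      SU.indicator (fun v => Real.exp (c * mm l v)) with hgUdef
    set gV : (↥(Finset.Ioc l j) → ℝ) → ℝ :=
      fun v => Real.exp (c * ∑ r ∈ Finset.univ, v r) with hgVdef
    have hgU : Measurable gU := Measurable.indicator ((hmm l).const_mul c).exp hSU
    have hgV : Measurable gV :=
      ((Finset.measurable_sum _ (fun r _ => measurable_pi_apply r)).const_mul c).exp
    have hUV : IndepFun (fun ω => gU (fun r => Z (↑r) ω)) (fun ω => gV (fun r => Z (↑r) ω)) P :=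
      base.comp hgU hgV
    have hmeq : ∀ l', l' ≤ l → ∀ ω, mm l' (fun r => Z (↑r) ω) = M l' ω := by
      intro l' hl' ω
      rw [hmmdef]
      simp only
      rw [Finset.sum_filter, Finset.univ_eq_attach,
        Finset.sum_attach (Finset.Icc i l) (fun r => if r ≤ l' then Z r ω else 0),
        ← Finset.sum_filter]
      congr 1
      ext x
      simp only [Finset.mem_filter, Finset.mem_Icc]
      omega
    have hUe : ∀ ω, gU (fun r : ↥(Finset.Icc i l) => Z (↑r) ω)
        = Set.indicator (A l) (fun ω' => Real.exp (c * M l ω')) ω := by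
      intro ω
      have hmem : ((fun r : ↥(Finset.Icc i l) => Z (↑r) ω) ∈ SU) ↔ ω ∈ A l := by
        rw [hAmem]
        show ((fun r : ↥(Finset.Icc i l) => Z (↑r) ω) ∈
          ({v | t ≤ mm l v} ∩ ⋂ l' ∈ (Finset.Icc i (l-1) : Finset ℤ), {v | mm l' v < t})) ↔ _
        simp only [Set.mem_inter_iff, Set.mem_setOf_eq, Set.mem_iInter]
        rw [hmeq l le_rfl ω]
        refine and_congr Iff.rfl ?_
        constructor
        · intro h l' hl'
          have := h l' hl'
          rwa [hmeq l' (by have := (Finset.mem_Icc.1 hl').2; omega) ω] at this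
        · intro h l' hl'
          rw [hmeq l' (by have := (Finset.mem_Icc.1 hl').2; omega) ω]
          exact h l' hl'
      show SU.indicator (fun v => Real.exp (c * mm l v)) _ = _
      by_cases h : ω ∈ A l
      · rw [Set.indicator_of_mem (hmem.2 h), Set.indicator_of_mem h, hmeq l le_rfl]
      · rw [Set.indicator_of_notMem (fun hh => h (hmem.1 hh)), Set.indicator_of_notMem h]
    have hVe : ∀ ω, gV (fun r => Z (↑r) ω) = Real.exp (c * T ω) := by
      intro ω
      rw [hgVdef]
      simp only
      rw [Finset.univ_eq_attach, Finset.sum_attach (Finset.Ioc l j) (fun r => Z r ω)]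
    have hUmeas : Measurable (fun ω => gU (fun r => Z (↑r) ω)) :=
      hgU.comp (measurable_pi_lambda _ (fun r => hm (↑r)))
    have hVmeas : Measurable (fun ω => gV (fun r => Z (↑r) ω)) :=
      hgV.comp (measurable_pi_lambda _ (fun r => hm (↑r)))
    have hIU : ∫ ω, gU (fun r => Z (↑r) ω) ∂P = ∫ ω in A l, Real.exp (c * M l ω) ∂P := by
      simp_rw [hUe]
      exact integral_indicator (hMeasA l)
    have hIV : ∫ ω, gV (fun r => Z (↑r) ω) ∂P = ∫ ω, Real.exp (c * T ω) ∂P := by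
      simp_rw [hVe]
    have hPV : ∫ ω, gU (fun r => Z (↑r) ω) * gV (fun r => Z (↑r) ω) ∂P
        = ∫ ω in A l, Real.exp (c * M j ω) ∂P := by
      rw [← integral_indicator (hMeasA l)]
      congr 1
      ext ω
      rw [hUe, hVe]
      by_cases h : ω ∈ A l
      · rw [Set.indicator_of_mem h, Set.indicator_of_mem h, ← Real.exp_add, hsplit ω]
        ring_nf
      · rw [Set.indicator_of_notMem h, Set.indicator_of_notMem h, zero_mul]
    calc Real.exp (c * t) * (P (A l)).toReal
        ≤ ∫ ω in A l, Real.exp (c * M l ω) ∂P := step1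
      _ ≤ (∫ ω in A l, Real.exp (c * M l ω) ∂P) * ∫ ω, Real.exp (c * T ω) ∂P :=
          le_mul_of_one_le_right
            (setIntegral_nonneg (hMeasA l) (fun ω _ => (Real.exp_pos _).le)) hT1
      _ = (∫ ω, gU (fun r => Z (↑r) ω) ∂P) * ∫ ω, gV (fun r => Z (↑r) ω) ∂P := by
          rw [hIU, hIV]
      _ = ∫ ω, gU (fun r => Z (↑r) ω) * gV (fun r => Z (↑r) ω) ∂P :=
          (hUV.integral_mul_eq_mul_integral hUmeas.aestronglyMeasurable hVmeas.aestronglyMeasurable).symm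
      _ = ∫ ω in A l, Real.exp (c * M j ω) ∂P := hPV
  -- global assembly
  have sum_le : ∑ l ∈ Finset.Icc i j, ∫ ω in A l, Real.exp (c * M j ω) ∂P
      ≤ ∫ ω, Real.exp (c * M j ω) ∂P := by
    rw [← integral_biUnion_finset _ (fun l _ => hMeasA l) hDisj
      (fun l _ => (hintM j).integrableOn)]
    exact setIntegral_le_integral (hintM j) (ae_of_all _ (fun ω => (Real.exp_pos _).le))
  have hcard : (((Finset.Icc i j).card : ℕ) : ℝ) = (j : ℝ) - (i : ℝ) + 1 := by
    rw [Int.card_Icc]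
    have h0 : (0:ℤ) ≤ j + 1 - i := by omega
    rw [show ((j + 1 - i).toNat : ℝ) = (((j + 1 - i).toNat : ℤ) : ℝ) by push_cast; ring,
      Int.toNat_of_nonneg h0]
    push_cast
    ring
  have hmgf : ∫ ω, Real.exp (c * M j ω) ∂P ≤ Real.exp (((j:ℝ) - (i:ℝ) + 1) * c ^ 2 / 2) := by
    have heq : ∫ ω, Real.exp (c * M j ω) ∂P = mgf (∑ r ∈ Finset.Icc i j, Z r) P c := by
      unfold ProbabilityTheory.mgf
      congr 1
      ext ω
      simp only [Finset.sum_apply]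
      rfl
    rw [heq, hind.mgf_sum hm]
    calc ∏ r ∈ Finset.Icc i j, mgf (Z r) P c
        ≤ ∏ r ∈ Finset.Icc i j, Real.exp (c ^ 2 / 2) :=
          Finset.prod_le_prod (fun r _ => mgf_nonneg)
            (fun r _ => by rw [mgf]; exact mgf_aux P (hm r) (hb r) (hmean r) c)
      _ = Real.exp (((Finset.Icc i j).card : ℝ) * (c ^ 2 / 2)) := by
          rw [Finset.prod_const, ← Real.exp_nat_mul]
      _ = Real.exp (((j:ℝ) - (i:ℝ) + 1) * c ^ 2 / 2) := by rw [hcard]; ring_nf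
  rw [hE, measure_biUnion_finset hDisj (fun l _ => hMeasA l)]
  have hne : ∑ l ∈ Finset.Icc i j, P (A l) ≠ ⊤ :=
    (ENNReal.sum_lt_top.2 (fun l _ => measure_lt_top P _)).ne
  rw [ENNReal.le_ofReal_iff_toReal_le hne (Real.exp_nonneg _),
    ENNReal.toReal_sum (fun l _ => measure_ne_top P _)]
  have h1 : Real.exp (c * t) * ∑ l ∈ Finset.Icc i j, (P (A l)).toReal
      ≤ Real.exp (((j:ℝ) - (i:ℝ) + 1) * c ^ 2 / 2) := by
    rw [Finset.mul_sum]
    exact le_trans (Finset.sum_le_sum key) (le_trans sum_le hmgf)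
  rw [Real.exp_add, Real.exp_neg]
  rw [inv_mul_eq_div, le_div_iff₀ (Real.exp_pos _)]
  linarith [h1, mul_comm (Real.exp (c * t)) (∑ l ∈ Finset.Icc i j, (P (A l)).toReal)]

end Helpers

/-- Maximal concentration bound for an i.i.d. Bernoulli(p) sequence:
`P(max_{l ∈ [i,j]} |x[i,l] − (l−i+1)p| > t) ≤ 6 exp(−2t²/(9(j−i+1)))`. -/
theorem stmt16 {Ω : Type} [MeasurableSpace Ω] (P : Measure Ω) [IsProbabilityMeasure P]
    (p : ℝ) (hp0 : 0 < p) (hp1 : p < 1)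
    (X : Ω → Config) (hconf : ∀ ω, IsConfig (X ω))
    (hmeas : ∀ i : ℤ, Measurable fun ω => X ω i)
    (hindep : iIndepFun (fun i ω => X ω i) P)
    (hber : ∀ i : ℤ, P {ω | X ω i = 1} = ENNReal.ofReal p)
    (i j : ℤ) (hij : i ≤ j) (t : ℝ) (ht : 0 < t) :
    P {ω | t < (Finset.Icc i j).sup' (Finset.nonempty_Icc.mpr hij)
          (fun l => |(cnt (X ω) i l : ℝ) - ((l : ℝ) - (i : ℝ) + 1) * p|)}
      ≤ ENNReal.ofReal (6 * Real.exp (-2 * t ^ 2 / (9 * ((j : ℝ) - (i : ℝ) + 1)))) := by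

  classical
  have hijR : (i : ℝ) ≤ (j : ℝ) := by exact_mod_cast hij
  have hn : 0 < (j : ℝ) - (i : ℝ) + 1 := by linarith
  set c : ℝ := t / ((j : ℝ) - (i : ℝ) + 1) with hcdef
  have hc : 0 < c := div_pos ht hn
  -- the two centered families
  set Zp : ℤ → Ω → ℝ := fun r ω => ((X ω r : ℤ) : ℝ) - p with hZp
  set Zm : ℤ → Ω → ℝ := fun r ω => p - ((X ω r : ℤ) : ℝ) with hZm
  have hcast : ∀ r : ℤ, Measurable (fun ω => ((X ω r : ℤ) : ℝ)) :=
    fun r => (measurable_of_countable (fun z : ℤ => (z : ℝ))).comp (hmeas r)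
  have hmp : ∀ r, Measurable (Zp r) := fun r => (hcast r).sub measurable_const
  have hmm' : ∀ r, Measurable (Zm r) := fun r => measurable_const.sub (hcast r)
  have hindp : iIndepFun Zp P :=
    hindep.comp (fun _ => fun z : ℤ => ((z : ℝ) - p))
      (fun _ => measurable_of_countable _)
  have hindm : iIndepFun Zm P :=
    hindep.comp (fun _ => fun z : ℤ => (p - (z : ℝ)))
      (fun _ => measurable_of_countable _)
  have hvals : ∀ r ω, ((X ω r : ℤ) : ℝ) = 0 ∨ ((X ω r : ℤ) : ℝ) = 1 := by
    intro r ω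
    rcases hconf ω r with h | h
    · left; rw [h]; norm_num
    · right; rw [h]; norm_num
  have hbp : ∀ r ω, |Zp r ω| ≤ 1 := by
    intro r ω
    rcases hvals r ω with h | h <;> rw [hZp] <;> simp only <;> rw [h] <;>
      rw [abs_le] <;> constructor <;> linarith
  have hbm : ∀ r ω, |Zm r ω| ≤ 1 := by
    intro r ω
    rcases hvals r ω with h | h <;> rw [hZm] <;> simp only <;> rw [h] <;>
      rw [abs_le] <;> constructor <;> linarith
  have hXmean : ∀ r, ∫ ω, ((X ω r : ℤ) : ℝ) ∂P = p := by
    intro r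
    have hset : MeasurableSet {ω | X ω r = 1} := (hmeas r) (measurableSet_singleton 1)
    have heq : (fun ω => ((X ω r : ℤ) : ℝ))
        = Set.indicator {ω | X ω r = 1} (fun _ => (1 : ℝ)) := by
      funext ω
      rcases hconf ω r with h | h
      · rw [Set.indicator_of_notMem (by simp [Set.mem_setOf_eq, h]), h]; norm_num
      · rw [Set.indicator_of_mem (by simp [Set.mem_setOf_eq, h]), h]; norm_num
    rw [heq, integral_indicator_const (1 : ℝ) hset, measureReal_def, hber r, smul_eq_mul, mul_one,
      ENNReal.toReal_ofReal hp0.le]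
  have hXint : ∀ r, Integrable (fun ω => ((X ω r : ℤ) : ℝ)) P := by
    intro r
    refine integrable_of_bdd P (C := 1) (hcast r) (fun ω => ?_)
    rcases hvals r ω with h | h <;> rw [h] <;> norm_num
  have hmeanp : ∀ r, ∫ ω, Zp r ω ∂P = 0 := by
    intro r
    rw [hZp]
    simp only
    rw [integral_sub (hXint r) (integrable_const p), hXmean r, integral_const]
    simp
  have hmeanm : ∀ r, ∫ ω, Zm r ω ∂P = 0 := by
    intro r
    rw [hZm]
    simp only
    rw [integral_sub (integrable_const p) (hXint r), hXmean r, integral_const]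
    simp
  -- event inclusion
  have hcard : ∀ l : ℤ, i ≤ l → (((Finset.Icc i l).card : ℕ) : ℝ) = (l : ℝ) - (i : ℝ) + 1 := by
    intro l hl
    rw [Int.card_Icc]
    rw [show (((l + 1 - i).toNat : ℕ) : ℝ) = (((l + 1 - i).toNat : ℤ) : ℝ) by push_cast; ring,
      Int.toNat_of_nonneg (by omega)]
    push_cast
    ring
  have hsump : ∀ ω l, i ≤ l →
      ∑ r ∈ Finset.Icc i l, Zp r ω = (cnt (X ω) i l : ℝ) - ((l : ℝ) - (i : ℝ) + 1) * p := by
    intro ω l hl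
    rw [hZp]
    simp only
    rw [Finset.sum_sub_distrib, Finset.sum_const, cnt]
    rw [← hcard l hl]
    push_cast
    ring
  have hsumm : ∀ ω l, i ≤ l →
      ∑ r ∈ Finset.Icc i l, Zm r ω = -((cnt (X ω) i l : ℝ) - ((l : ℝ) - (i : ℝ) + 1) * p) := by
    intro ω l hl
    rw [hZm]
    simp only
    rw [Finset.sum_sub_distrib, Finset.sum_const, cnt]
    rw [← hcard l hl]
    push_cast
    ring
  have hsub : {ω | t < (Finset.Icc i j).sup' (Finset.nonempty_Icc.mpr hij)
          (fun l => |(cnt (X ω) i l : ℝ) - ((l : ℝ) - (i : ℝ) + 1) * p|)}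
      ⊆ {ω | ∃ l ∈ Finset.Icc i j, t ≤ ∑ r ∈ Finset.Icc i l, Zp r ω}
        ∪ {ω | ∃ l ∈ Finset.Icc i j, t ≤ ∑ r ∈ Finset.Icc i l, Zm r ω} := by
    intro ω hω
    rw [Set.mem_setOf_eq] at hω
    obtain ⟨l, hl, hsup⟩ := Finset.exists_mem_eq_sup' (Finset.nonempty_Icc.mpr hij)
      (fun l => |(cnt (X ω) i l : ℝ) - ((l : ℝ) - (i : ℝ) + 1) * p|)
    rw [hsup] at hω
    have hil := (Finset.mem_Icc.1 hl).1
    rcases abs_cases ((cnt (X ω) i l : ℝ) - ((l : ℝ) - (i : ℝ) + 1) * p) with ⟨he, _⟩ | ⟨he, _⟩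
    · left
      exact ⟨l, hl, by rw [hsump ω l hil]; linarith⟩
    · right
      exact ⟨l, hl, by rw [hsumm ω l hil]; linarith⟩
  -- apply onesided twice
  have hone := onesided P Zp hmp hindp hbp hmeanp i j hij (t := t) hc
  have htwo := onesided P Zm hmm' hindm hbm hmeanm i j hij (t := t) hc
  have hexp : -(c * t) + ((j : ℝ) - (i : ℝ) + 1) * c ^ 2 / 2
      = -t ^ 2 / (2 * ((j : ℝ) - (i : ℝ) + 1)) := by
    rw [hcdef]
    field_simp
    ring
  have hfinal : Real.exp (-t ^ 2 / (2 * ((j : ℝ) - (i : ℝ) + 1)))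
      + Real.exp (-t ^ 2 / (2 * ((j : ℝ) - (i : ℝ) + 1)))
      ≤ 6 * Real.exp (-2 * t ^ 2 / (9 * ((j : ℝ) - (i : ℝ) + 1))) := by
    have h1 : -t ^ 2 / (2 * ((j : ℝ) - (i : ℝ) + 1))
        ≤ -2 * t ^ 2 / (9 * ((j : ℝ) - (i : ℝ) + 1)) := by
      rw [div_le_div_iff₀ (by linarith) (by linarith)]
      nlinarith [sq_nonneg t]
    have h2 := Real.exp_le_exp.2 h1
    nlinarith [Real.exp_pos (-2 * t ^ 2 / (9 * ((j : ℝ) - (i : ℝ) + 1)))]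
  calc P {ω | t < (Finset.Icc i j).sup' (Finset.nonempty_Icc.mpr hij)
          (fun l => |(cnt (X ω) i l : ℝ) - ((l : ℝ) - (i : ℝ) + 1) * p|)}
      ≤ P ({ω | ∃ l ∈ Finset.Icc i j, t ≤ ∑ r ∈ Finset.Icc i l, Zp r ω}
        ∪ {ω | ∃ l ∈ Finset.Icc i j, t ≤ ∑ r ∈ Finset.Icc i l, Zm r ω}) := measure_mono hsub
    _ ≤ P {ω | ∃ l ∈ Finset.Icc i j, t ≤ ∑ r ∈ Finset.Icc i l, Zp r ω}
        + P {ω | ∃ l ∈ Finset.Icc i j, t ≤ ∑ r ∈ Finset.Icc i l, Zm r ω} := measure_union_le _ _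
    _ ≤ ENNReal.ofReal (Real.exp (-(c * t) + ((j : ℝ) - (i : ℝ) + 1) * c ^ 2 / 2))
        + ENNReal.ofReal (Real.exp (-(c * t) + ((j : ℝ) - (i : ℝ) + 1) * c ^ 2 / 2)) :=
        add_le_add hone htwo
    _ = ENNReal.ofReal (Real.exp (-t ^ 2 / (2 * ((j : ℝ) - (i : ℝ) + 1)))
        + Real.exp (-t ^ 2 / (2 * ((j : ℝ) - (i : ℝ) + 1)))) := by
        rw [hexp, ENNReal.ofReal_add (Real.exp_nonneg _) (Real.exp_nonneg _)]
    _ ≤ ENNReal.ofReal (6 * Real.exp (-2 * t ^ 2 / (9 * ((j : ℝ) - (i : ℝ) + 1)))) :=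
        ENNReal.ofReal_le_ofReal hfinal
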